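/- Let h and k be coprime positive integers, let n be an integer, and let ν be a real number with 0 < ν < 1. Then s*(h,k;(n+ν)/k,0) + (1/2)·{(n+ν)/k} = s*(h,k;n/k,0) + (1/2)·{n/k}. -/

import Mathlib

open Real

/-- The modified sawtooth function `B̄₁*(x) = x − ⌊x⌋ − 1/2` for all real `x`. -/
noncomputable def sawtoothStar (x : ℝ) : ℝ := Int.fract x - 1/2

/-- The modified Dedekind–Rademacher sum
`s*(h,k;y,x) = Σ_{r=0}^{k−1} B̄₁*(h(r+x)/k + y)·B̄₁*((r+x)/k)`. -/
noncomputable def modDedekindRademacher (h k : ℕ) (y x : ℝ) : ℝ :=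
  ∑ r ∈ Finset.range k,
    sawtoothStar ((h : ℝ) * ((r : ℝ) + x) / k + y) * sawtoothStar (((r : ℝ) + x) / k)

lemma floor_shift (k : ℕ) (hk : 0 < k) (m : ℤ) (ε : ℝ) (h0 : 0 ≤ ε) (h1 : ε < 1) :
    ⌊((m : ℝ) + ε) / (k : ℝ)⌋ = m / (k : ℤ) := by
  have hk' : (0:ℝ) < (k:ℝ) := by exact_mod_cast hk
  have hkz : (0:ℤ) < (k:ℤ) := by exact_mod_cast hk
  have ha0 : (0:ℤ) ≤ m % (k:ℤ) := Int.emod_nonneg m (by omega)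
  have ha1 : m % (k:ℤ) < (k:ℤ) := Int.emod_lt_of_pos m hkz
  have hm : (k:ℤ) * (m / (k:ℤ)) + m % (k:ℤ) = m := Int.mul_ediv_add_emod m k
  have hmr : (m:ℝ) = (k:ℝ) * ((m / (k:ℤ) : ℤ) : ℝ) + ((m % (k:ℤ) : ℤ) : ℝ) := by
    exact_mod_cast hm.symm
  have ha0' : (0:ℝ) ≤ ((m % (k:ℤ) : ℤ) : ℝ) := by exact_mod_cast ha0
  have ha1' : ((m % (k:ℤ) : ℤ) : ℝ) + 1 ≤ (k:ℝ) := by exact_mod_cast ha1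
  rw [Int.floor_eq_iff]
  constructor
  · rw [le_div_iff₀ hk']; nlinarith
  · rw [div_lt_iff₀ hk']; push_cast; nlinarith

lemma fract_shift (k : ℕ) (hk : 0 < k) (m : ℤ) (ε : ℝ) (h0 : 0 ≤ ε) (h1 : ε < 1) :
    Int.fract (((m : ℝ) + ε) / (k : ℝ)) = Int.fract ((m : ℝ) / (k : ℝ)) + ε / (k : ℝ) := by
  have hk' : (0:ℝ) < (k:ℝ) := by exact_mod_cast hk
  have e1 := floor_shift k hk m ε h0 h1
  have e2 := floor_shift k hk m 0 le_rfl one_pos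
  rw [add_zero] at e2
  rw [Int.fract, Int.fract, e1, e2]
  ring

/-- Knuth's identity: for coprime positive integers `h, k`, an integer `n`, and
`0 < ν < 1`, `s*(h,k;(n+ν)/k,0) + (1/2){(n+ν)/k} = s*(h,k;n/k,0) + (1/2){n/k}`. -/
theorem modDedekindRademacher_piecewise_constant (h k : ℕ) (hh : 0 < h) (hk : 0 < k)
    (hco : Nat.Coprime h k) (n : ℤ) (ν : ℝ) (hν0 : 0 < ν) (hν1 : ν < 1) :
    modDedekindRademacher h k (((n : ℝ) + ν) / k) 0
      + 1/2 * Int.fract (((n : ℝ) + ν) / k) =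
    modDedekindRademacher h k ((n : ℝ) / k) 0 + 1/2 * Int.fract ((n : ℝ) / k) := by
  have hk' : (0:ℝ) < (k:ℝ) := by exact_mod_cast hk
  -- each term shifts by ν/k
  have key : ∀ r : ℕ,
      sawtoothStar ((h : ℝ) * ((r : ℝ) + 0) / k + ((n : ℝ) + ν) / k)
        = sawtoothStar ((h : ℝ) * ((r : ℝ) + 0) / k + (n : ℝ) / k) + ν / k := by
    intro r
    have e1 : (h : ℝ) * ((r : ℝ) + 0) / k + ((n : ℝ) + ν) / k
        = ((((h * r : ℕ) : ℤ) + n : ℤ) + ν) / k := by push_cast; ring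
    have e2 : (h : ℝ) * ((r : ℝ) + 0) / k + (n : ℝ) / k
        = ((((h * r : ℕ) : ℤ) + n : ℤ) : ℝ) / k := by push_cast; ring
    rw [e1, e2, sawtoothStar, sawtoothStar,
      fract_shift k hk ((h * r : ℕ) + n) ν hν0.le hν1]
    ring
  -- sum of sawtoothStar (r/k) over range k is -1/2
  have hsaw : ∑ r ∈ Finset.range k, sawtoothStar (((r : ℝ) + 0) / k) = -(1/2) := by
    have hterm : ∀ r ∈ Finset.range k,
        sawtoothStar (((r : ℝ) + 0) / k) = (r : ℝ) / k - 1/2 := by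
      intro r hr
      have hrk : r < k := Finset.mem_range.mp hr
      have h01 : Int.fract ((r : ℝ) / k) = (r : ℝ) / k := by
        apply Int.fract_eq_self.mpr
        constructor
        · positivity
        · rw [div_lt_one hk']; exact_mod_cast hrk
      rw [add_zero, sawtoothStar, h01]
    rw [Finset.sum_congr rfl hterm, Finset.sum_sub_distrib]
    have hsum : (∑ r ∈ Finset.range k, ((r : ℝ) / k)) = ((k : ℝ) - 1) / 2 := by
      rw [← Finset.sum_div]
      have : (∑ r ∈ Finset.range k, (r : ℝ)) = (k : ℝ) * ((k : ℝ) - 1) / 2 := by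
        have h2 := Finset.sum_range_id_mul_two k
        have h2' : ((∑ i ∈ Finset.range k, i) * 2 : ℕ) = (k * (k - 1) : ℕ) := h2
        have hcast : ((∑ i ∈ Finset.range k, i : ℕ) : ℝ) * 2 = (k : ℝ) * ((k : ℝ) - 1) := by
          have hk1 : ((k - 1 : ℕ) : ℝ) = (k : ℝ) - 1 := by
            have : 1 ≤ k := hk
            push_cast [Nat.cast_sub this]; ring
          calc ((∑ i ∈ Finset.range k, i : ℕ) : ℝ) * 2
              = (((∑ i ∈ Finset.range k, i) * 2 : ℕ) : ℝ) := by push_cast; ring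
            _ = ((k * (k - 1) : ℕ) : ℝ) := by rw [h2']
            _ = (k : ℝ) * ((k : ℝ) - 1) := by push_cast [hk1]; ring
        push_cast at hcast ⊢
        linarith
      rw [this]; field_simp
    rw [hsum, Finset.sum_const, Finset.card_range]
    rw [nsmul_eq_mul]; ring
  -- the sum identity
  have hmain : modDedekindRademacher h k (((n : ℝ) + ν) / k) 0
      = modDedekindRademacher h k ((n : ℝ) / k) 0 + (ν / k) * (-(1/2)) := by
    rw [modDedekindRademacher, modDedekindRademacher, ← hsaw, Finset.mul_sum,
      ← Finset.sum_add_distrib]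
    apply Finset.sum_congr rfl
    intro r hr
    rw [key r]
    ring
  have hfr : Int.fract (((n : ℝ) + ν) / k) = Int.fract ((n : ℝ) / k) + ν / k :=
    fract_shift k hk n ν hν0.le hν1
  rw [hmain, hfr]
  ring
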